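/- For any function $f:\mathbb{N}\to\mathbb{N}$ define $M_f(i,j)=1$ if $j<f(i)$ and $M_f(i,j)=1/i$ if $j\ge f(i)$. Let $\Gamma\subseteq\mathbb{N}^{\mathbb{N}}$ be cofinal for eventual domination $\le^*$. In the dual $\ell_\infty(\Gamma)$ of $\ell_1(\Gamma)$, let $x^*_{i,j}\in[0,1]^\Gamma$ be defined by $x^*_{i,j}(f)=M_f(i,j)$, and let $C$ be the convex hull of $\{x^*_{i,j} : (i,j)\in\mathbb{N}\times\mathbb{N}\}$. Then no sequence in $C$ is weak*-null, i.e., for every sequence $(y_n^*)$ in $C$ there exists $f\in\Gamma$ such that $y_n^*(f)$ does not converge to $0$. -/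

import Mathlib

open Filter Topology

/-- Core of Example 5.3: with `M_f(i,j) = 1` if `j < f(i)` and `1/(i+1)` otherwise
(indices starting at 0), `Γ` cofinal in `(ℕ → ℕ, ≤*)`, `x i j ∈ [0,1]^Γ` the
corresponding elements of `ℓ∞(Γ) = ℓ₁(Γ)*`, and `C` their convex hull, no sequence in
`C` is weak*-null: every sequence `(y n)` in `C` admits `f ∈ Γ` with
`y n (f) ↛ 0`. -/
theorem stmt13 (Γ : Set (ℕ → ℕ))
    (hcof : ∀ g : ℕ → ℕ, ∃ f ∈ Γ, ∀ᶠ i in atTop, g i ≤ f i)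
    (x : ℕ → ℕ → (ℕ → ℕ) → ℝ)
    (hx : ∀ i j f, x i j f = if j < f i then 1 else 1 / ((i : ℝ) + 1))
    (y : ℕ → (ℕ → ℕ) → ℝ)
    (hy : ∀ n, y n ∈ convexHull ℝ {g : (ℕ → ℕ) → ℝ | ∃ i j, g = x i j}) :
    ∃ f ∈ Γ, ¬ Tendsto (fun n => y n f) atTop (𝓝 0) := by
  -- basic estimates on x
  have hxge : ∀ (i j : ℕ) (f : ℕ → ℕ), 1 / ((i:ℝ) + 1) ≤ x i j f := by
    intro i j f; rw [hx]; split
    · rw [div_le_one (by positivity)]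
      have := (Nat.cast_nonneg i : (0:ℝ) ≤ i); linarith
    · exact le_refl _
  have hx0 : ∀ i j (f : ℕ → ℕ), (0:ℝ) ≤ x i j f := by
    intro i j f
    exact le_trans (by positivity) (hxge i j f)
  have hx1 : ∀ i j (f : ℕ → ℕ), j < f i → x i j f = 1 := by
    intro i j f h; rw [hx, if_pos h]
  -- representation of each y n as a finite convex combination indexed by ℕ × ℕ
  have repr : ∀ n, ∃ (s : Finset (ℕ × ℕ)) (w : ℕ × ℕ → ℝ),
      (∀ p ∈ s, 0 ≤ w p) ∧ (∑ p ∈ s, w p = 1) ∧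
      ∀ f, y n f = ∑ p ∈ s, w p * x p.1 p.2 f := by
    intro n
    obtain ⟨ι, _, w, z, hw0, hw1, hz, hxe⟩ := mem_convexHull_iff_exists_fintype.mp (hy n)
    choose i j hij using hz
    refine ⟨Finset.univ.image (fun a => (i a, j a)),
      fun p => ∑ a ∈ Finset.univ.filter (fun a => (i a, j a) = p), w a, ?_, ?_, ?_⟩
    · exact fun p _ => Finset.sum_nonneg fun a _ => hw0 a
    · rw [← hw1]
      exact Finset.sum_fiberwise_of_maps_to
        (fun a _ => Finset.mem_image_of_mem _ (Finset.mem_univ a)) w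
    · intro f
      have h1 : y n f = ∑ a, w a * z a f := by
        rw [← hxe]; simp [Finset.sum_apply]
      rw [h1,
        ← Finset.sum_fiberwise_of_maps_to (g := fun a => (i a, j a))
          (fun a _ => Finset.mem_image_of_mem _ (Finset.mem_univ a))
          (fun a => w a * z a f)]
      refine Finset.sum_congr rfl fun p _ => ?_
      rw [Finset.sum_mul]
      refine Finset.sum_congr rfl fun a ha => ?_
      have hap : (i a, j a) = p := by simpa using (Finset.mem_filter.mp ha).2
      rw [hij a, ← hap]
  choose s w hw0 hw1 hyf using repr
  -- weight of rows below N
  set W : ℕ → ℕ → ℝ := fun n N => ∑ p ∈ (s n).filter (fun p => p.1 < N), w n p with hW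
  by_cases hA : ∃ N, ∃ ε > (0:ℝ), ∃ᶠ n in atTop, ε ≤ W n N
  · -- Case A : mass ε stays on rows < N infinitely often; any f ∈ Γ works
    obtain ⟨N, ε, hε, hfreq⟩ := hA
    obtain ⟨f, hfΓ, -⟩ := hcof (fun _ => 0)
    refine ⟨f, hfΓ, fun ht => ?_⟩
    have hlb : ∀ n, W n N / (N + 1) ≤ y n f := by
      intro n
      rw [hyf n f, hW]
      calc (∑ p ∈ (s n).filter (fun p => p.1 < N), w n p) / (N + 1)
          = ∑ p ∈ (s n).filter (fun p => p.1 < N), w n p * (1 / ((N:ℝ) + 1)) := by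
            rw [← Finset.sum_mul]; ring
        _ ≤ ∑ p ∈ (s n).filter (fun p => p.1 < N), w n p * x p.1 p.2 f := by
            refine Finset.sum_le_sum fun p hp => ?_
            obtain ⟨hps, hpN⟩ := Finset.mem_filter.mp hp
            refine mul_le_mul_of_nonneg_left ?_ (hw0 n p hps)
            refine le_trans ?_ (hxge p.1 p.2 f)
            have h1 : (p.1 : ℝ) + 1 ≤ (N:ℝ) + 1 := by
              have := (Nat.cast_le (α := ℝ)).mpr (Nat.succ_le_of_lt hpN)
              push_cast at this; linarith
            exact one_div_le_one_div_of_le (by positivity) h1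
        _ ≤ ∑ p ∈ s n, w n p * x p.1 p.2 f := by
            refine Finset.sum_le_sum_of_subset_of_nonneg (Finset.filter_subset _ _)
              fun p hps _ => mul_nonneg (hw0 n p hps) (hx0 p.1 p.2 f)
    have hev : ∀ᶠ n in atTop, y n f < ε / (N + 1) := by
      have hpos : (0:ℝ) < ε / (N + 1) := by positivity
      filter_upwards [ht (Metric.ball_mem_nhds 0 hpos)] with n hn
      have : |y n f| < ε / (N + 1) := by simpa [Real.dist_eq] using hn
      exact lt_of_abs_lt this
    obtain ⟨n, hn1, hn2⟩ := (hfreq.and_eventually hev).exists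
    have : ε / (N + 1) ≤ y n f := le_trans (by gcongr) (hlb n)
    linarith
  · -- Case B : for every N the mass of rows < N goes to 0
    push_neg at hA
    have hB : ∀ N, ∀ ε > (0:ℝ), ∀ᶠ n in atTop, W n N < ε := by
      intro N ε hε
      have := hA N ε hε
      filter_upwards [this] with n hn
      exact hn
    -- recursive construction of indices
    have key : ∀ p : ℕ × ℕ, ∃ q : ℕ × ℕ, p.1 < q.1 ∧ W q.1 p.2 < 1/2 ∧ p.2 < q.2 ∧
        ∀ r ∈ s q.1, r.1 < q.2 := by
      intro p
      obtain ⟨m, hm1, hm2⟩ := ((hB p.2 (1/2) (by norm_num)).and (eventually_gt_atTop p.1)).exists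
      refine ⟨(m, max p.2 ((s m).sup Prod.fst) + 1), hm2, hm1, ?_, ?_⟩
      · exact Nat.lt_succ_of_le (le_max_left _ _)
      · intro r hr
        exact Nat.lt_succ_of_le (le_trans (Finset.le_sup (f := Prod.fst) hr) (le_max_right _ _))
    choose step hstep1 hstep2 hstep3 hstep4 using key
    set seq : ℕ → ℕ × ℕ := fun k => step^[k] (0, 0) with hseq
    set n : ℕ → ℕ := fun k => (seq k).1 with hn
    set N : ℕ → ℕ := fun k => (seq k).2 with hNdef
    have hseqsucc : ∀ k, seq (k+1) = step (seq k) := fun k =>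
      Function.iterate_succ_apply' step k (0,0)
    have hnmono : StrictMono n := strictMono_nat_of_lt_succ fun k => by
      show (seq k).1 < (seq (k+1)).1
      rw [hseqsucc]; exact hstep1 (seq k)
    have hNk : ∀ k, k ≤ N k := by
      intro k
      induction k with
      | zero => exact Nat.zero_le _
      | succ k ih =>
        have h3 := hstep3 (seq k)
        rw [← hseqsucc] at h3
        have ih' : k ≤ (seq k).2 := ih
        show k + 1 ≤ (seq (k+1)).2
        omega
    -- the dominating function g
    set g : ℕ → ℕ := fun i =>
      1 + (Finset.range (i+1)).sup (fun k => (s (n (k+1))).sup Prod.snd) with hg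
    obtain ⟨f, hfΓ, hfev⟩ := hcof g
    obtain ⟨I, hI⟩ := eventually_atTop.mp hfev
    refine ⟨f, hfΓ, fun ht => ?_⟩
    -- key lower bound along the subsequence
    have hlb : ∀ k, I ≤ k → 1/2 ≤ y (n (k+1)) f := by
      intro k hk
      have hwhalf : W (n (k+1)) (N k) < 1/2 := by
        have h2 := hstep2 (seq k); rw [← hseqsucc] at h2; exact h2
      rw [hyf (n (k+1)) f]
      have hsplit := Finset.sum_filter_add_sum_filter_not (s (n (k+1)))
        (fun p => p.1 < N k) (w (n (k+1)))
      rw [hw1 (n (k+1))] at hsplit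
      have hrest : 1/2 ≤ ∑ p ∈ (s (n (k+1))).filter (fun p => ¬ p.1 < N k), w (n (k+1)) p := by
        rw [hW] at hwhalf; linarith
      calc (1:ℝ)/2 ≤ ∑ p ∈ (s (n (k+1))).filter (fun p => ¬ p.1 < N k), w (n (k+1)) p := hrest
        _ = ∑ p ∈ (s (n (k+1))).filter (fun p => ¬ p.1 < N k), w (n (k+1)) p * x p.1 p.2 f := by
            refine Finset.sum_congr rfl fun p hp => ?_
            obtain ⟨hps, hpN⟩ := Finset.mem_filter.mp hp
            have hkp : k ≤ p.1 := le_trans (hNk k) (le_of_not_gt hpN)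
            have hIp : I ≤ p.1 := le_trans hk hkp
            have hjlt : p.2 < g p.1 := by
              show p.2 < 1 + (Finset.range (p.1+1)).sup (fun k => (s (n (k+1))).sup Prod.snd)
              have h1 : p.2 ≤ (s (n (k+1))).sup Prod.snd := Finset.le_sup (f := Prod.snd) hps
              have h2 : (s (n (k+1))).sup Prod.snd ≤
                  (Finset.range (p.1+1)).sup (fun k => (s (n (k+1))).sup Prod.snd) :=
                Finset.le_sup (f := fun k => (s (n (k+1))).sup Prod.snd) (Finset.mem_range.mpr (Nat.lt_succ_of_le hkp))
              omega
            have : p.2 < f p.1 := lt_of_lt_of_le hjlt (hI p.1 hIp)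
            rw [hx1 p.1 p.2 f this, mul_one]
        _ ≤ ∑ p ∈ s (n (k+1)), w (n (k+1)) p * x p.1 p.2 f := by
            refine Finset.sum_le_sum_of_subset_of_nonneg (Finset.filter_subset _ _)
              fun p hps _ => mul_nonneg (hw0 _ p hps) (hx0 p.1 p.2 f)
    -- contradiction with convergence to 0
    have hev : ∀ᶠ m in atTop, y m f < 1/2 := by
      filter_upwards [ht (Metric.ball_mem_nhds 0 (by norm_num : (0:ℝ) < 1/2))] with m hm
      exact lt_of_abs_lt (by simpa [Real.dist_eq] using hm)
    obtain ⟨M, hM⟩ := eventually_atTop.mp hev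
    set k := max I M with hkdef
    have h1 : 1/2 ≤ y (n (k+1)) f := hlb k (le_max_left _ _)
    have h2 : y (n (k+1)) f < 1/2 := by
      refine hM _ ?_
      calc M ≤ k := le_max_right _ _
        _ ≤ k + 1 := Nat.le_succ _
        _ ≤ n (k+1) := hnmono.le_apply
    linarith
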